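/- Let I ⊆ J be monomial ideals in K[x_1,...,x_n] with I strongly d-Golod. Then IJ is strongly d-Golod: for all monomials w_1, w_2 ∈ IJ and variables x_i | w_1, x_j | w_2, one has w_1 w_2/(x_i x_j) ∈ IJ. -/
import Mathlib


/-- An ideal of `K[x_1,…,x_n]` is a monomial ideal if with each polynomial it contains
all the monomials in its support. -/
def IsMonomialIdeal {K : Type*} [Field K] {n : ℕ}
    (I : Ideal (MvPolynomial (Fin n) K)) : Prop :=
  ∀ f ∈ I, ∀ m ∈ f.support, MvPolynomial.monomial m (1 : K) ∈ I

/-- A monomial ideal `L` of `K[x_1,…,x_n]` is strongly d-Golod if for all monomials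
`u, v ∈ L` and all variables `x_i ∣ u`, `x_j ∣ v`, one has `uv/(x_i x_j) ∈ L`. -/
def StronglyDGolod {K : Type*} [Field K] {n : ℕ}
    (L : Ideal (MvPolynomial (Fin n) K)) : Prop :=
  ∀ a b : Fin n →₀ ℕ, MvPolynomial.monomial a (1 : K) ∈ L →
    MvPolynomial.monomial b (1 : K) ∈ L →
    ∀ i j : Fin n, a i ≠ 0 → b j ≠ 0 →
      MvPolynomial.monomial (a + b - Finsupp.single i 1 - Finsupp.single j 1) (1 : K) ∈ L

lemma monomial_mem_mul_decomp {K : Type*} [Field K] {n : ℕ}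
    {I J : Ideal (MvPolynomial (Fin n) K)}
    (hI : IsMonomialIdeal I) (hJ : IsMonomialIdeal J) {a : Fin n →₀ ℕ}
    (h : MvPolynomial.monomial a (1 : K) ∈ I * J) :
    ∃ u v, MvPolynomial.monomial u (1 : K) ∈ I ∧ MvPolynomial.monomial v (1 : K) ∈ J ∧
      a = u + v := by
  classical
  have key : ∀ f ∈ I * J, ∀ m ∈ f.support,
      ∃ u v, MvPolynomial.monomial u (1 : K) ∈ I ∧ MvPolynomial.monomial v (1 : K) ∈ J ∧
        m = u + v := by
    intro f hf
    refine Submodule.mul_induction_on hf ?_ ?_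
    · intro p hp q hq m hm
      have := MvPolynomial.support_mul p q hm
      rw [Finset.mem_add] at this
      obtain ⟨u, hu, v, hv, huv⟩ := this
      exact ⟨u, v, hI p hp u hu, hJ q hq v hv, huv.symm⟩
    · intro x y hx hy m hm
      have := Finsupp.support_add hm
      rw [Finset.mem_union] at this
      rcases this with h | h
      · exact hx m h
      · exact hy m h
  refine key _ h a ?_
  rw [MvPolynomial.support_monomial, if_neg one_ne_zero]
  exact Finset.mem_singleton_self a

lemma mem_mul_of_eq {K : Type*} [Field K] {n : ℕ}
    {I J : Ideal (MvPolynomial (Fin n) K)} {u v c e : Fin n →₀ ℕ}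
    (hu : MvPolynomial.monomial u (1 : K) ∈ I) (hv : MvPolynomial.monomial v (1 : K) ∈ J)
    (he : e = u + (v + c)) :
    MvPolynomial.monomial e (1 : K) ∈ I * J := by
  subst he
  have hvc : MvPolynomial.monomial (v + c) (1 : K) ∈ J := by
    have := Ideal.mul_mem_right (MvPolynomial.monomial c (1 : K)) J hv
    rwa [MvPolynomial.monomial_mul, one_mul] at this
  have := Ideal.mul_mem_mul hu hvc
  rwa [MvPolynomial.monomial_mul, one_mul] at this

lemma finsupp_master {n : ℕ} (x p y q : Fin n →₀ ℕ) {i j : Fin n}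
    (hx : x i ≠ 0) (hy : y j ≠ 0) :
    (x + p) + (y + q) - Finsupp.single i 1 - Finsupp.single j 1
      = (x + y - Finsupp.single i 1 - Finsupp.single j 1) + (p + q) := by
  have hx' : 1 ≤ x i := Nat.one_le_iff_ne_zero.mpr hx
  have hy' : 1 ≤ y j := Nat.one_le_iff_ne_zero.mpr hy
  ext k
  simp only [Finsupp.add_apply, Finsupp.tsub_apply, Finsupp.single_apply]
  split_ifs with hik hjk hjk
  all_goals try subst hik
  all_goals try subst hjk
  all_goals omega

/-- If `I ⊆ J` are monomial ideals with `I` strongly d-Golod, then `IJ` is strongly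
d-Golod. -/
theorem stronglyDGolod_mul {K : Type*} [Field K] {n : ℕ}
    (I J : Ideal (MvPolynomial (Fin n) K))
    (hI : IsMonomialIdeal I) (hJ : IsMonomialIdeal J)
    (hIJ : I ≤ J) (hIG : StronglyDGolod I) :
    StronglyDGolod (I * J) := by
  intro a b ha hb i j hai hbj
  obtain ⟨u1, v1, hu1, hv1, hav⟩ := monomial_mem_mul_decomp hI hJ ha
  obtain ⟨u2, v2, hu2, hv2, hbv⟩ := monomial_mem_mul_decomp hI hJ hb
  subst hav hbv
  by_cases h1 : u1 i ≠ 0 <;> by_cases h2 : u2 j ≠ 0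
  · -- Case A
    exact mem_mul_of_eq (c := v2) (hIG u1 u2 hu1 hu2 i j h1 h2) hv1
      (by rw [finsupp_master u1 v1 u2 v2 h1 h2])
  · -- Case B : u1 i ≠ 0, v2 j ≠ 0
    push_neg at h2
    have hv2j : v2 j ≠ 0 := by
      intro h; apply hbj; simp [Finsupp.add_apply, h2, h]
    exact mem_mul_of_eq (c := u1 + v2 - Finsupp.single i 1 - Finsupp.single j 1) hu2 hv1
      (by rw [add_comm u2 v2, finsupp_master u1 v1 v2 u2 h1 hv2j]
          generalize u1 + v2 - Finsupp.single i 1 - Finsupp.single j 1 = c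
          abel)
  · -- Case C : v1 i ≠ 0, u2 j ≠ 0
    push_neg at h1
    have hv1i : v1 i ≠ 0 := by
      intro h; apply hai; simp [Finsupp.add_apply, h1, h]
    exact mem_mul_of_eq (c := v1 + u2 - Finsupp.single i 1 - Finsupp.single j 1) hu1 hv2
      (by rw [add_comm u1 v1, finsupp_master v1 u1 u2 v2 hv1i h2]
          generalize v1 + u2 - Finsupp.single i 1 - Finsupp.single j 1 = c
          abel)
  · -- Case D : v1 i ≠ 0, v2 j ≠ 0
    push_neg at h1 h2
    have hv1i : v1 i ≠ 0 := by
      intro h; apply hai; simp [Finsupp.add_apply, h1, h]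
    have hv2j : v2 j ≠ 0 := by
      intro h; apply hbj; simp [Finsupp.add_apply, h2, h]
    exact mem_mul_of_eq (c := v1 + v2 - Finsupp.single i 1 - Finsupp.single j 1) hu1 (hIJ hu2)
      (by rw [add_comm u1 v1, add_comm u2 v2, finsupp_master v1 u1 v2 u2 hv1i hv2j]
          generalize v1 + v2 - Finsupp.single i 1 - Finsupp.single j 1 = c
          abel)
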